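/- Let r be a coherent risk measure on L^p(Ω; ℝ) with exact dual representation r(η) = sup_{ζ∈𝒵} E(−ηζ)/E(ζ), where 𝒵 ⊆ L^q(Ω; ℝ₊) and E(ζ) > 0 for every ζ ∈ 𝒵. Let K ⊆ ℝ^d be a deterministic closed convex cone with ℝ₋^d ⊆ K ≠ ℝ^d, with dual cone K' = {u ∈ ℝ^d : ⟨u, x⟩ ≤ 0 for all x ∈ K}, and let X ∈ L^p(Ω; ℝ^d). Then ⋂_{ζ ∈ 𝒵, u ∈ ℝ₊^d} {x ∈ ℝ^d : ⟨x, u⟩·E(ζ) ≥ −E(h_{X+K}(u)·ζ)} = ⋂_{u ∈ K'} {x ∈ ℝ^d : r(⟨X, u⟩) ≤ ⟨x, u⟩}, where h_{X+K}(u) denotes the random variable ω ↦ sup{⟨u, y⟩ : y ∈ X(ω) + K} and constraints with E(h_{X+K}(u)·ζ) = +∞ are vacuous. -/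

import Mathlib

open MeasureTheory Set Filter
open scoped Pointwise ENNReal RealInnerProductSpace

noncomputable section

/-- `ℝ^d` with the Euclidean norm. -/
abbrev Vec (d : ℕ) := EuclideanSpace ℝ (Fin d)

/-- Effros measurability of a set-valued map: `{ω : X(ω) ∩ G ≠ ∅}` is measurable
for every open `G`. -/
def EffrosMeasurable {Ω : Type*} [MeasurableSpace Ω] {d : ℕ} (X : Ω → Set (Vec d)) : Prop :=
  ∀ G : Set (Vec d), IsOpen G → MeasurableSet {ω | (X ω ∩ G).Nonempty}

/-- A set-valued portfolio: an Effros-measurable map with nonempty closed convex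
lower-set values. -/
structure IsPortfolio {Ω : Type*} [MeasurableSpace Ω] {d : ℕ} (X : Ω → Set (Vec d)) : Prop where
  effros : EffrosMeasurable X
  nonempty : ∀ ω, (X ω).Nonempty
  isClosed : ∀ ω, IsClosed (X ω)
  convex : ∀ ω, Convex ℝ (X ω)
  lower : ∀ ω, ∀ x ∈ X ω, ∀ y : Vec d, (∀ i, y i ≤ x i) → y ∈ X ω

/-- A coherent risk measure on `L^p(Ω; ℝ)` with values in `ℝ ∪ {+∞} ⊆ EReal`:
monotone (antitone in the gain), cash invariant, subadditive and positively homogeneous. -/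
structure IsCoherent {Ω : Type*} [MeasurableSpace Ω] (μ : Measure Ω) (p : ℝ≥0∞)
    (r : (Ω → ℝ) → EReal) : Prop where
  ne_bot : ∀ ξ : Ω → ℝ, MemLp ξ p μ → r ξ ≠ ⊥
  mono : ∀ ξ η : Ω → ℝ, MemLp ξ p μ → MemLp η p μ → (∀ᵐ ω ∂μ, ξ ω ≤ η ω) → r η ≤ r ξ
  cash : ∀ ξ : Ω → ℝ, MemLp ξ p μ → ∀ c : ℝ, r (fun ω => ξ ω + c) = r ξ - (c : EReal)
  subadd : ∀ ξ η : Ω → ℝ, MemLp ξ p μ → MemLp η p μ →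
    r (fun ω => ξ ω + η ω) ≤ r ξ + r η
  homog : ∀ ξ : Ω → ℝ, MemLp ξ p μ → ∀ c : ℝ, 0 < c →
    r (fun ω => c * ξ ω) = (c : EReal) * r ξ

/-- The selection risk measure `ρ_{s,0}(𝐗)`: the set of deterministic `x ∈ ℝ^d`
for which `𝐗 + x` has a selection with all individually acceptable components. -/
def rho0 {Ω : Type*} [MeasurableSpace Ω] (μ : Measure Ω) (p : ℝ≥0∞) {d : ℕ}
    (r : Fin d → (Ω → ℝ) → EReal) (X : Ω → Set (Vec d)) : Set (Vec d) :=
  {x | ∃ ξ : Ω → Vec d, MemLp ξ p μ ∧ (∀ᵐ ω ∂μ, ξ ω ∈ X ω) ∧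
        ∀ i, r i (fun ω => ξ ω i + x i) ≤ 0}

/-- The support function `h_M(u) = sup{⟨u,x⟩ : x ∈ M}`, with values in `EReal`. -/
def suppFn {d : ℕ} (M : Set (Vec d)) (u : Vec d) : EReal :=
  ⨆ x ∈ M, ((⟪u, x⟫ : ℝ) : EReal)

lemma supp_dual {d : ℕ} {K : Set (Vec d)} (h0 : (0:Vec d) ∈ K) (u X0 : Vec d)
    (hu : ∀ y ∈ K, ⟪u, y⟫ ≤ 0) : suppFn ((X0 + ·) '' K) u = ((⟪u, X0⟫ : ℝ) : EReal) := by
  unfold suppFn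
  rw [iSup_image]
  apply le_antisymm
  · refine iSup₂_le fun y hy => ?_
    rw [EReal.coe_le_coe_iff, inner_add_right]
    nlinarith [hu y hy]
  · refine le_iSup₂_of_le 0 h0 ?_
    simp

lemma supp_top {d : ℕ} {K : Set (Vec d)} (hKcone : ∀ c : ℝ, 0 < c → ∀ y ∈ K, c • y ∈ K)
    {u y : Vec d} (hy : y ∈ K) (hyu : 0 < ⟪u, y⟫) (X0 : Vec d) :
    suppFn ((X0 + ·) '' K) u = ⊤ := by
  rw [EReal.eq_top_iff_forall_lt]
  intro c
  set t : ℝ := max 1 ((c - ⟪u, X0⟫) / ⟪u, y⟫ + 1) with ht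
  have ht1 : (0:ℝ) < t := lt_of_lt_of_le one_pos (le_max_left _ _)
  have ht2 : (c - ⟪u, X0⟫) / ⟪u, y⟫ < t := lt_of_lt_of_le (lt_add_one _) (le_max_right _ _)
  have hlt : c < ⟪u, X0 + t • y⟫ := by
    rw [inner_add_right, real_inner_smul_right]
    have := (div_lt_iff₀ hyu).mp ht2
    linarith
  calc ((c:EReal)) < ((⟪u, X0 + t • y⟫ : ℝ) : EReal) := EReal.coe_lt_coe_iff.mpr hlt
    _ ≤ _ := by
        unfold suppFn
        rw [iSup_image]
        exact le_iSup₂_of_le (t • y) (hKcone t ht1 y hy) le_rfl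

lemma dual_nonneg {d : ℕ} {K : Set (Vec d)} (hKneg : {y : Vec d | ∀ i, y i ≤ 0} ⊆ K)
    {u : Vec d} (hu : ∀ y ∈ K, ⟪u, y⟫ ≤ 0) : ∀ i, 0 ≤ u i := by
  intro i
  have hmem : (-EuclideanSpace.single i (1:ℝ)) ∈ K := by
    apply hKneg
    intro j
    by_cases h : j = i <;> simp [EuclideanSpace.single_apply, h]
  have := hu _ hmem
  rw [inner_neg_right, EuclideanSpace.inner_single_right] at this
  simp at this
  linarith

/-- Proposition 5.1: for a deterministic exchange cone `K` and identical marginal risk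
measures with exact dual representation,
`ρ_{𝒵₀}(X + K) = ⋂_{u ∈ K'} {x : r(⟨X,u⟩) ≤ ⟨x,u⟩}`. -/
theorem statement10 {Ω : Type*} [MeasurableSpace Ω] (μ : Measure Ω) [IsProbabilityMeasure μ]
    [μ.IsComplete] {d : ℕ} (p q : ℝ≥0∞) (hp : 1 ≤ p) (hpq : 1/p + 1/q = 1)
    (r : (Ω → ℝ) → EReal) (hr : IsCoherent μ p r)
    (𝒵 : Set (Ω → ℝ)) (h𝒵ne : 𝒵.Nonempty)
    (h𝒵 : ∀ ζ ∈ 𝒵, MemLp ζ q μ ∧ (∀ᵐ ω ∂μ, 0 ≤ ζ ω) ∧ 0 < ∫ ω, ζ ω ∂μ)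
    (hrep : ∀ η : Ω → ℝ, MemLp η p μ →
      r η = ⨆ ζ ∈ 𝒵, (((∫ ω, -η ω * ζ ω ∂μ) / ∫ ω, ζ ω ∂μ : ℝ) : EReal))
    (K : Set (Vec d)) (hKcl : IsClosed K) (hKconv : Convex ℝ K)
    (hKcone : ∀ c : ℝ, 0 < c → ∀ y ∈ K, c • y ∈ K)
    (hKneg : {y : Vec d | ∀ i, y i ≤ 0} ⊆ K) (hKuniv : K ≠ Set.univ)
    (X : Ω → Vec d) (hX : MemLp X p μ) :
    (⋂ ζ ∈ 𝒵, ⋂ u ∈ {u : Vec d | ∀ i, 0 ≤ u i},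
      {x : Vec d |
        (∀ᵐ ω ∂μ, suppFn ((X ω + ·) '' K) u * ((ζ ω : ℝ) : EReal) ≠ ⊤) →
        Integrable (fun ω => (suppFn ((X ω + ·) '' K) u * ((ζ ω : ℝ) : EReal)).toReal) μ →
        -∫ ω, (suppFn ((X ω + ·) '' K) u * ((ζ ω : ℝ) : EReal)).toReal ∂μ ≤
          ⟪x, u⟫ * ∫ ω, ζ ω ∂μ}) =
    ⋂ u ∈ {u : Vec d | ∀ y ∈ K, ⟪u, y⟫ ≤ 0},
      {x : Vec d | r (fun ω => ⟪X ω, u⟫) ≤ ((⟪x, u⟫ : ℝ) : EReal)} := by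
  have h0K : (0:Vec d) ∈ K := hKneg (fun i => le_of_eq rfl)
  have h1div : (1:ℝ≥0∞)/1 = 1/q + 1/p := by
    rw [div_one, add_comm]; exact hpq.symm
  have hmem : ∀ u : Vec d, MemLp (fun ω => ⟪X ω, u⟫) p μ := fun u =>
    (funext fun ω => real_inner_comm (X ω) u : (fun ω => (⟪u, X ω⟫:ℝ)) = fun ω => ⟪X ω, u⟫) ▸
      hX.const_inner u
  have hintmul : ∀ u : Vec d, ∀ ζ ∈ 𝒵, Integrable (fun ω => ⟪u, X ω⟫ * ζ ω) μ := by
    intro u ζ hζ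
    have h2 := memLp_one_iff_integrable.mp (MemLp.smul (𝕜 := ℝ) (E := ℝ) (hX.const_inner u) (h𝒵 ζ hζ).1 (hpqr := ⟨by simpa [one_div] using h1div.symm⟩))
    have : (ζ • fun ω => (⟪u, X ω⟫:ℝ)) = fun ω => ⟪u, X ω⟫ * ζ ω := by
      funext ω; simp [mul_comm]
    rwa [this] at h2
  have hvac : ∀ ζ ∈ 𝒵, ∀ u : Vec d, (∃ y ∈ K, 0 < ⟪u, y⟫) →
      ¬ (∀ᵐ ω ∂μ, suppFn ((X ω + ·) '' K) u * ((ζ ω : ℝ) : EReal) ≠ ⊤) := by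
    intro ζ hζ u ⟨y, hy, hyu⟩ hae
    obtain ⟨hζq, hζ0, hζint⟩ := h𝒵 ζ hζ
    have hzero : ∀ᵐ ω ∂μ, ζ ω = 0 := by
      filter_upwards [hae, hζ0] with ω h1 h2
      by_contra hne
      exact h1 (by
        rw [supp_top hKcone hy hyu (X ω)]
        exact EReal.top_mul_coe_of_pos (lt_of_le_of_ne h2 (Ne.symm hne)))
    have : ∫ ω, ζ ω ∂μ = 0 := by
      rw [integral_congr_ae hzero, integral_zero]
    linarith
  ext x
  simp only [Set.mem_iInter, Set.mem_setOf_eq]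
  constructor
  · intro h u hu
    rw [hrep _ (hmem u)]
    refine iSup₂_le fun ζ hζ => ?_
    obtain ⟨hζq, hζ0, hζint⟩ := h𝒵 ζ hζ
    have hsupp : ∀ ω, suppFn ((X ω + ·) '' K) u = ((⟪u, X ω⟫:ℝ):EReal) :=
      fun ω => supp_dual h0K u (X ω) hu
    have hfun : (fun ω => (suppFn ((X ω + ·) '' K) u * ((ζ ω : ℝ) : EReal)).toReal)
        = fun ω => ⟪u, X ω⟫ * ζ ω := by
      funext ω; rw [hsupp ω, ← EReal.coe_mul, EReal.toReal_coe]
    have key := h ζ hζ u (dual_nonneg hKneg hu)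
      (Eventually.of_forall fun ω => by
        rw [hsupp ω, ← EReal.coe_mul]; exact EReal.coe_ne_top _)
      (by rw [hfun]; exact hintmul u ζ hζ)
    rw [hfun] at key
    rw [EReal.coe_le_coe_iff, div_le_iff₀ hζint]
    have heq : (∫ ω, -⟪X ω, u⟫ * ζ ω ∂μ) = -∫ ω, ⟪u, X ω⟫ * ζ ω ∂μ := by
      rw [← integral_neg]; congr 1; funext ω; rw [real_inner_comm]; ring
    rw [heq]; linarith
  · intro h ζ hζ u hu hae hint
    obtain ⟨hζq, hζ0, hζint⟩ := h𝒵 ζ hζ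
    by_cases hK' : ∀ y ∈ K, ⟪u, y⟫ ≤ 0
    · have hsupp : ∀ ω, suppFn ((X ω + ·) '' K) u = ((⟪u, X ω⟫:ℝ):EReal) :=
        fun ω => supp_dual h0K u (X ω) hK'
      have hfun : (fun ω => (suppFn ((X ω + ·) '' K) u * ((ζ ω : ℝ) : EReal)).toReal)
          = fun ω => ⟪u, X ω⟫ * ζ ω := by
        funext ω; rw [hsupp ω, ← EReal.coe_mul, EReal.toReal_coe]
      have hru := h u hK'
      rw [hrep _ (hmem u)] at hru
      have hterm : (((∫ ω, -⟪X ω, u⟫ * ζ ω ∂μ) / ∫ ω, ζ ω ∂μ : ℝ) : EReal)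
          ≤ ((⟪x, u⟫ : ℝ) : EReal) := le_trans (le_iSup₂_of_le ζ hζ le_rfl) hru
      rw [EReal.coe_le_coe_iff, div_le_iff₀ hζint] at hterm
      rw [hfun]
      have heq : (∫ ω, -⟪X ω, u⟫ * ζ ω ∂μ) = -∫ ω, ⟪u, X ω⟫ * ζ ω ∂μ := by
        rw [← integral_neg]; congr 1; funext ω; rw [real_inner_comm]; ring
      rw [heq] at hterm
      linarith
    · push_neg at hK'
      obtain ⟨y, hy, hyu⟩ := hK'
      exact absurd hae (hvac ζ hζ u ⟨y, hy, hyu⟩)
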